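/- Let K > 0, k ∈ ℝ, n > 0, D ∈ ℝ, and let a : ℝ → ℝ be three times differentiable on an open interval I with a > 0 on I. Define H(t) = a'(t)/a(t). Assume for all t ∈ I: 0 = −(2/K²) H'(t) − (n D/3) a(t)^(−n) + (2k/K²) a(t)^(−2). Then for all t ∈ I: H''(t) = (−2k/a(t)² + K² n² D/(6 a(t)^n)) · H(t). -/

import Mathlib

/-- Equation (3.14) implies equation (3.15):
H'' = (−2k/a² + K²n²D/(6aⁿ))·H. -/
theorem constraint_implies_Hpp
    (K k n D : ℝ) (hK : 0 < K) (hn : 0 < n)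
    (t₁ t₂ : ℝ) (a : ℝ → ℝ)
    (ha : ∀ t ∈ Set.Ioo t₁ t₂, DifferentiableAt ℝ a t)
    (ha' : ∀ t ∈ Set.Ioo t₁ t₂, DifferentiableAt ℝ (deriv a) t)
    (ha'' : ∀ t ∈ Set.Ioo t₁ t₂, DifferentiableAt ℝ (deriv (deriv a)) t)
    (hapos : ∀ t ∈ Set.Ioo t₁ t₂, 0 < a t)
    (H : ℝ → ℝ) (hH : H = fun t => deriv a t / a t)
    (h314 : ∀ t ∈ Set.Ioo t₁ t₂,
      0 = -(2 / K ^ 2) * deriv H t - n * D / 3 * a t ^ (-n)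
        + 2 * k / K ^ 2 * a t ^ (-2 : ℝ)) :
    ∀ t ∈ Set.Ioo t₁ t₂,
      deriv (deriv H) t
        = (-2 * k / a t ^ 2 + K ^ 2 * n ^ 2 * D / (6 * a t ^ n)) * H t := by
  intro t ht
  have hK2 : (K : ℝ) ^ 2 ≠ 0 := pow_ne_zero _ hK.ne'
  set g : ℝ → ℝ := fun s => k * a s ^ (-2 : ℝ) - K ^ 2 * n * D / 6 * a s ^ (-n)
    with hg
  have hdH : ∀ s ∈ Set.Ioo t₁ t₂, deriv H s = g s := by
    intro s hs
    have h := h314 s hs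
    simp only [hg]
    field_simp at h ⊢
    have h' : (-(6 * deriv H s) - K ^ 2 * (n * D * a s ^ (-n))
        + 6 * (k * a s ^ (-2 : ℝ))) * K ^ 2 = 0 := by linear_combination (-K ^ 2) * h
    have h'' := (mul_eq_zero.mp h').resolve_right hK2
    linarith
  have hev : deriv H =ᶠ[nhds t] g :=
    Filter.eventuallyEq_of_mem (isOpen_Ioo.mem_nhds ht) hdH
  have hx : 0 < a t := hapos t ht
  have hA : HasDerivAt a (deriv a t) t := (ha t ht).hasDerivAt
  have h1 : HasDerivAt (fun s => a s ^ (-2 : ℝ))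
      (deriv a t * (-2) * a t ^ ((-2 : ℝ) - 1)) t :=
    hA.rpow_const (Or.inl hx.ne')
  have h2 : HasDerivAt (fun s => a s ^ (-n))
      (deriv a t * (-n) * a t ^ (-n - 1)) t :=
    hA.rpow_const (Or.inl hx.ne')
  have hgd : HasDerivAt g
      (k * (deriv a t * (-2) * a t ^ ((-2 : ℝ) - 1))
        - K ^ 2 * n * D / 6 * (deriv a t * (-n) * a t ^ (-n - 1))) t :=
    (h1.const_mul k).sub (h2.const_mul _)
  rw [hev.deriv_eq, hgd.deriv, hH]
  have e1 : a t ^ ((-2 : ℝ) - 1) = (a t ^ (3 : ℕ))⁻¹ := by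
    rw [show ((-2 : ℝ) - 1) = -((3 : ℕ) : ℝ) by norm_num, Real.rpow_neg hx.le,
      Real.rpow_natCast]
  have e2 : a t ^ (-n - 1) = (a t ^ n * a t)⁻¹ := by
    rw [show (-n - 1) = -(n + 1) by ring, Real.rpow_neg hx.le,
      Real.rpow_add hx, Real.rpow_one]
  have hxn : (0 : ℝ) < a t ^ n := Real.rpow_pos_of_pos hx n
  rw [e1, e2]
  field_simp
  ring
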